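/- A simplicial set A : Δᵒᵖ → Set is isomorphic to the nerve of a small category if and only if for every k ≥ 2 the Segal map S_k : A_k → A_1 ×_{A_0} ⋯ ×_{A_0} A_1 (the k-fold wide pullback of A_1 over A_0 along source and target) is an isomorphism; moreover, the nerve of any small category satisfies this condition. -/

import Mathlib

/-!
STATEMENT 10: A simplicial set `A : Δᵒᵖ ⥤ Set` is isomorphic to the nerve of a small
category if and only if for every `k ≥ 2` the Segal map
`S_k : A_k ⟶ A_1 ×_{A_0} ⋯ ×_{A_0} A_1` (here realised as the spine map
`A.spine k : A _⦋k⦌ → A.Path k`, whose codomain is the `k`-fold wide pullback of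
`A_1` over `A_0` along source and target) is an isomorphism; moreover, the nerve of
any small category satisfies this condition.
-/

open CategoryTheory Simplicial SimplexCategory SimplicialObject

universe u

namespace SegalProof

/- SimplexCategory hom computations -/

lemma delta_one_comp_diag (n : ℕ) :
    SimplexCategory.δ 1 ≫ diag n = SimplexCategory.const ⦋0⦌ ⦋n⦌ 0 := by
  apply SimplexCategory.Hom.ext_zero_left
  rfl

lemma delta_zero_comp_diag (n : ℕ) :
    SimplexCategory.δ 0 ≫ diag n = SimplexCategory.const ⦋0⦌ ⦋n⦌ (Fin.last n) := by
  apply SimplexCategory.Hom.ext_zero_left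
  rfl

lemma mkOfSucc_zero_comp_mkOfLeComp {n : ℕ} (i j k : Fin (n+1)) (h₁ : i ≤ j) (h₂ : j ≤ k) :
    mkOfSucc 0 ≫ mkOfLeComp i j k h₁ h₂ = mkOfLe i j h₁ := by
  apply SimplexCategory.Hom.ext_one_left <;> rfl

lemma mkOfSucc_one_comp_mkOfLeComp {n : ℕ} (i j k : Fin (n+1)) (h₁ : i ≤ j) (h₂ : j ≤ k) :
    mkOfSucc 1 ≫ mkOfLeComp i j k h₁ h₂ = mkOfLe j k h₂ := by
  apply SimplexCategory.Hom.ext_one_left <;> rfl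

lemma diag_comp_mkOfLeComp {n : ℕ} (i j k : Fin (n+1)) (h₁ : i ≤ j) (h₂ : j ≤ k) :
    diag 2 ≫ mkOfLeComp i j k h₁ h₂ = mkOfLe i k (h₁.trans h₂) := by
  apply SimplexCategory.Hom.ext_one_left <;> rfl

lemma mkOfLe_refl {n : ℕ} (i : Fin (n+1)) :
    mkOfLe i i le_rfl = SimplexCategory.σ 0 ≫ SimplexCategory.const ⦋0⦌ ⦋n⦌ i := by
  apply SimplexCategory.Hom.ext_one_left <;> rfl

lemma mkOfLe_eq_intervalEdge {n j l : ℕ} (hjl : j + l ≤ n) :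
    mkOfLe ⟨j, by omega⟩ ⟨j + l, by omega⟩ (by simp [Fin.le_def]) = intervalEdge j l hjl := by
  apply SimplexCategory.Hom.ext_one_left <;> rfl

lemma mkOfSucc_comp {m n : ℕ} (φ : (⦋m⦌ : SimplexCategory) ⟶ ⦋n⦌) (i : Fin m) :
    mkOfSucc i ≫ φ =
      mkOfLe (φ.toOrderHom i.castSucc) (φ.toOrderHom i.succ)
        (φ.toOrderHom.monotone (Fin.castSucc_le_succ i)) := by
  apply SimplexCategory.Hom.ext_one_left <;> rfl

end SegalProof
namespace SegalProof

lemma diag_zero_eq : diag 0 = SimplexCategory.σ 0 := by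
  apply SimplexCategory.Hom.ext_one_left <;> rfl

lemma mkOfSucc_zero_one : mkOfSucc (0 : Fin 1) = 𝟙 (⦋1⦌ : SimplexCategory) := by
  apply SimplexCategory.Hom.ext_one_left <;> rfl

open SSet

variable {X : SSet.{u}}

/-- Build a length-2 path from two compatible edges. -/
@[simps]
def pathOfEdges (e f : X _⦋1⦌) (h : X.δ 0 e = X.δ 1 f) : Path X 2 where
  vertex := ![X.δ 1 e, X.δ 0 e, X.δ 0 f]
  arrow := ![e, f]
  arrow_src i := by fin_cases i; exacts [rfl, h.symm]
  arrow_tgt i := by fin_cases i; exacts [rfl, rfl]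

variable [IsStrictSegal X]

/-- Composition of two compatible edges in a strict Segal simplicial set. -/
noncomputable def compEdge (e f : X _⦋1⦌) (h : X.δ 0 e = X.δ 1 f) : X _⦋1⦌ :=
  (StrictSegal.ofIsStrictSegal X).spineToDiagonal (pathOfEdges e f h)

lemma δ_one_spineToDiagonal {n : ℕ} (p : Path X n) :
    X.δ 1 ((StrictSegal.ofIsStrictSegal X).spineToDiagonal p) = p.vertex 0 := by
  dsimp only [StrictSegal.spineToDiagonal, SimplicialObject.diagonal, SimplicialObject.δ]
  rw [← FunctorToTypes.map_comp_apply, ← op_comp, delta_one_comp_diag,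
    StrictSegal.spineToSimplex_vertex]

lemma δ_zero_spineToDiagonal {n : ℕ} (p : Path X n) :
    X.δ 0 ((StrictSegal.ofIsStrictSegal X).spineToDiagonal p) = p.vertex (Fin.last n) := by
  dsimp only [StrictSegal.spineToDiagonal, SimplicialObject.diagonal, SimplicialObject.δ]
  rw [← FunctorToTypes.map_comp_apply, ← op_comp, delta_zero_comp_diag,
    StrictSegal.spineToSimplex_vertex]

lemma δ_one_compEdge (e f : X _⦋1⦌) (h : X.δ 0 e = X.δ 1 f) :
    X.δ 1 (compEdge e f h) = X.δ 1 e :=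
  δ_one_spineToDiagonal (pathOfEdges e f h)

lemma δ_zero_compEdge (e f : X _⦋1⦌) (h : X.δ 0 e = X.δ 1 f) :
    X.δ 0 (compEdge e f h) = X.δ 0 f :=
  δ_zero_spineToDiagonal (pathOfEdges e f h)

/-- The key computation: the composite of the two short edges of a 2-simplex
is its diagonal. -/
lemma compEdge_eq_diagonal (S : X _⦋2⦌) (e f : X _⦋1⦌) (h : X.δ 0 e = X.δ 1 f)
    (he : e = X.map (mkOfSucc 0).op S) (hf : f = X.map (mkOfSucc 1).op S) :
    compEdge e f h = SimplicialObject.diagonal X S := by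
  subst he hf
  have hp : pathOfEdges (X.map (mkOfSucc 0).op S) (X.map (mkOfSucc 1).op S) h
      = X.spine 2 S := by
    refine SSet.Path.ext ?_ ?_
    · funext i
      fin_cases i
      · exact (X.spine 2 S).arrow_src 0
      · exact (X.spine 2 S).arrow_tgt 0
      · exact (X.spine 2 S).arrow_tgt 1
    · funext i
      fin_cases i <;> rfl
  rw [compEdge, hp, StrictSegal.spineToDiagonal, StrictSegal.spineToSimplex_spine_apply]

/-- The degenerate edge on a vertex. -/
noncomputable def idEdge (x : X _⦋0⦌) : X _⦋1⦌ := X.σ 0 x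

omit [IsStrictSegal X] in
lemma δ_one_idEdge (x : X _⦋0⦌) : X.δ 1 (idEdge x) = x := by
  dsimp only [idEdge, SimplicialObject.δ, SimplicialObject.σ]
  rw [← FunctorToTypes.map_comp_apply, ← op_comp]
  have : SimplexCategory.δ (1 : Fin 2) ≫ SimplexCategory.σ 0 = 𝟙 (⦋0⦌ : SimplexCategory) := by
    apply SimplexCategory.Hom.ext_zero_left; rfl
  rw [this, op_id, FunctorToTypes.map_id_apply]

omit [IsStrictSegal X] in
lemma δ_zero_idEdge (x : X _⦋0⦌) : X.δ 0 (idEdge x) = x := by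
  dsimp only [idEdge, SimplicialObject.δ, SimplicialObject.σ]
  rw [← FunctorToTypes.map_comp_apply, ← op_comp]
  have : SimplexCategory.δ (0 : Fin 2) ≫ SimplexCategory.σ 0 = 𝟙 (⦋0⦌ : SimplexCategory) := by
    apply SimplexCategory.Hom.ext_zero_left; rfl
  rw [this, op_id, FunctorToTypes.map_id_apply]

end SegalProof

namespace SegalProof

open SSet

variable {X : SSet.{u}} [IsStrictSegal X]

lemma mkOfSucc_eq_mkOfLe {n : ℕ} (i : Fin n) :
    mkOfSucc i = mkOfLe i.castSucc i.succ (Fin.castSucc_le_succ i) := by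
  apply SimplexCategory.Hom.ext_one_left <;> rfl

omit [IsStrictSegal X] in
lemma δ_one_mkOfLe_apply {n : ℕ} (Δ : X _⦋n⦌) (a b : Fin (n+1)) (h : a ≤ b) :
    X.δ 1 (X.map (mkOfLe a b h).op Δ) = X.map (SimplexCategory.const ⦋0⦌ ⦋n⦌ a).op Δ := by
  dsimp only [SimplicialObject.δ]
  rw [← FunctorToTypes.map_comp_apply, ← op_comp]
  have : SimplexCategory.δ (1 : Fin 2) ≫ mkOfLe a b h = SimplexCategory.const ⦋0⦌ ⦋n⦌ a := by
    apply SimplexCategory.Hom.ext_zero_left; rfl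
  rw [this]

omit [IsStrictSegal X] in
lemma δ_zero_mkOfLe_apply {n : ℕ} (Δ : X _⦋n⦌) (a b : Fin (n+1)) (h : a ≤ b) :
    X.δ 0 (X.map (mkOfLe a b h).op Δ) = X.map (SimplexCategory.const ⦋0⦌ ⦋n⦌ b).op Δ := by
  dsimp only [SimplicialObject.δ]
  rw [← FunctorToTypes.map_comp_apply, ← op_comp]
  have : SimplexCategory.δ (0 : Fin 2) ≫ mkOfLe a b h = SimplexCategory.const ⦋0⦌ ⦋n⦌ b := by
    apply SimplexCategory.Hom.ext_zero_left; rfl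
  rw [this]

/-- Composites of consecutive "long edges" of a simplex. -/
lemma compEdge_mkOfLe {n : ℕ} (Δ : X _⦋n⦌) (a b c : Fin (n+1)) (hab : a ≤ b) (hbc : b ≤ c)
    (e f : X _⦋1⦌) (h : X.δ 0 e = X.δ 1 f)
    (he : e = X.map (mkOfLe a b hab).op Δ) (hf : f = X.map (mkOfLe b c hbc).op Δ) :
    compEdge e f h = X.map (mkOfLe a c (hab.trans hbc)).op Δ := by
  have := compEdge_eq_diagonal (X.map (mkOfLeComp a b c hab hbc).op Δ) e f h ?_ ?_
  · rw [this]
    dsimp only [SimplicialObject.diagonal]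
    rw [← FunctorToTypes.map_comp_apply, ← op_comp, diag_comp_mkOfLeComp]
  · rw [← FunctorToTypes.map_comp_apply, ← op_comp, mkOfSucc_zero_comp_mkOfLeComp]
    exact he
  · rw [← FunctorToTypes.map_comp_apply, ← op_comp, mkOfSucc_one_comp_mkOfLeComp]
    exact hf

variable (X)

/-- The homotopy category of a strict Segal simplicial set. -/
def HoCat := X _⦋0⦌

variable {X}

/-- Morphisms in the homotopy category are edges with prescribed endpoints. -/
def HoHom (x y : HoCat X) : Type u :=
  {e : X.obj (Opposite.op (SimplexCategory.mk 1)) // X.δ 1 e = x ∧ X.δ 0 e = y}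

noncomputable instance : SmallCategory (HoCat X) where
  Hom x y := HoHom x y
  id x := ⟨idEdge x, δ_one_idEdge x, δ_zero_idEdge x⟩
  comp {x y z} e f :=
    ⟨compEdge e.1 f.1 (e.2.2.trans f.2.1.symm),
      (δ_one_compEdge _ _ _).trans e.2.1, (δ_zero_compEdge _ _ _).trans f.2.2⟩
  id_comp {x y} f := by
    apply Subtype.ext
    show compEdge (idEdge x) f.1 _ = f.1
    have := compEdge_eq_diagonal (X.σ 0 f.1) (idEdge x) f.1
      ((δ_zero_idEdge x).trans f.2.1.symm) ?_ ?_
    · rw [this]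
      dsimp only [SimplicialObject.diagonal, SimplicialObject.σ]
      rw [← FunctorToTypes.map_comp_apply, ← op_comp]
      have : diag 2 ≫ SimplexCategory.σ 0 = 𝟙 (⦋1⦌ : SimplexCategory) := by
        apply SimplexCategory.Hom.ext_one_left <;> rfl
      rw [this, op_id, FunctorToTypes.map_id_apply]
    · dsimp only [idEdge, SimplicialObject.σ]
      rw [← FunctorToTypes.map_comp_apply, ← op_comp]
      have : mkOfSucc (0 : Fin 2) ≫ SimplexCategory.σ 0
          = SimplexCategory.σ 0 ≫ SimplexCategory.δ 1 := by
        apply SimplexCategory.Hom.ext_one_left <;> rfl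
      rw [this, op_comp, FunctorToTypes.map_comp_apply]
      exact congrArg _ f.2.1.symm
    · dsimp only [SimplicialObject.σ]
      rw [← FunctorToTypes.map_comp_apply, ← op_comp]
      have : mkOfSucc (1 : Fin 2) ≫ SimplexCategory.σ 0 = 𝟙 (⦋1⦌ : SimplexCategory) := by
        apply SimplexCategory.Hom.ext_one_left <;> rfl
      rw [this, op_id, FunctorToTypes.map_id_apply]
  comp_id {x y} f := by
    apply Subtype.ext
    show compEdge f.1 (idEdge y) _ = f.1
    have := compEdge_eq_diagonal (X.σ 1 f.1) f.1 (idEdge y)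
      (f.2.2.trans (δ_one_idEdge y).symm) ?_ ?_
    · rw [this]
      dsimp only [SimplicialObject.diagonal, SimplicialObject.σ]
      rw [← FunctorToTypes.map_comp_apply, ← op_comp]
      have : diag 2 ≫ SimplexCategory.σ 1 = 𝟙 (⦋1⦌ : SimplexCategory) := by
        apply SimplexCategory.Hom.ext_one_left <;> rfl
      rw [this, op_id, FunctorToTypes.map_id_apply]
    · dsimp only [SimplicialObject.σ]
      rw [← FunctorToTypes.map_comp_apply, ← op_comp]
      have : mkOfSucc (0 : Fin 2) ≫ SimplexCategory.σ 1 = 𝟙 (⦋1⦌ : SimplexCategory) := by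
        apply SimplexCategory.Hom.ext_one_left <;> rfl
      rw [this, op_id, FunctorToTypes.map_id_apply]
    · dsimp only [idEdge, SimplicialObject.σ]
      rw [← FunctorToTypes.map_comp_apply, ← op_comp]
      have : mkOfSucc (1 : Fin 2) ≫ SimplexCategory.σ 1
          = SimplexCategory.σ 0 ≫ SimplexCategory.δ 0 := by
        apply SimplexCategory.Hom.ext_one_left <;> rfl
      rw [this, op_comp, FunctorToTypes.map_comp_apply]
      exact congrArg _ f.2.2.symm
  assoc {w x y z} e f g := by
    apply Subtype.ext
    let p : Path X 3 :=
      { vertex := ![w, x, y, z]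
        arrow := ![e.1, f.1, g.1]
        arrow_src := fun i => by
          fin_cases i; exacts [e.2.1, f.2.1, g.2.1]
        arrow_tgt := fun i => by
          fin_cases i; exacts [e.2.2, f.2.2, g.2.2] }
    let T : X _⦋3⦌ := (StrictSegal.ofIsStrictSegal X).spineToSimplex p
    have harr : ∀ i : Fin 3, p.arrow i = X.map (mkOfSucc i).op T := fun i =>
      (StrictSegal.spineToSimplex_arrow (StrictSegal.ofIsStrictSegal X) i p).symm
    have he : e.1 = X.map (mkOfLe 0 1 (by decide)).op T := by
      have h' : mkOfSucc (0 : Fin 3) = mkOfLe 0 1 (by decide) := by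
        apply SimplexCategory.Hom.ext_one_left <;> rfl
      rw [← h']; exact harr 0
    have hf : f.1 = X.map (mkOfLe 1 2 (by decide)).op T := by
      have h' : mkOfSucc (1 : Fin 3) = mkOfLe 1 2 (by decide) := by
        apply SimplexCategory.Hom.ext_one_left <;> rfl
      rw [← h']; exact harr 1
    have hg : g.1 = X.map (mkOfLe 2 3 (by decide)).op T := by
      have h' : mkOfSucc (2 : Fin 3) = mkOfLe 2 3 (by decide) := by
        apply SimplexCategory.Hom.ext_one_left <;> rfl
      rw [← h']; exact harr 2
    show compEdge (compEdge e.1 f.1 _) g.1 _ = compEdge e.1 (compEdge f.1 g.1 _) _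
    rw [compEdge_mkOfLe T 0 2 3 (by decide) (by decide) _ _ _
        (compEdge_mkOfLe T 0 1 2 (by decide) (by decide) _ _ _ he hf) hg,
      compEdge_mkOfLe T 0 1 3 (by decide) (by decide) _ _ _ he
        (compEdge_mkOfLe T 1 2 3 (by decide) (by decide) _ _ _ hf hg)]

end SegalProof
namespace SegalProof

open SSet

variable {X : SSet.{u}} [IsStrictSegal X]

lemma hoHom_comp_val {x y z : HoCat X} (u : x ⟶ y) (v : y ⟶ z) :
    (u ≫ v).1 = compEdge u.1 v.1 (u.2.2.trans v.2.1.symm) := rfl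

lemma hoHom_id_val (x : HoCat X) : (𝟙 x : x ⟶ x).1 = idEdge x := rfl

lemma val_eqToHom_comp {x y x' y' : HoCat X} (h : x = x') (h' : y' = y) (g : x' ⟶ y') :
    (eqToHom h ≫ g ≫ eqToHom h').1 = g.1 := by
  subst h h'
  simp

/-- The path in `X` underlying a sequence of composable arrows of the homotopy category. -/
@[simps]
def pathOf {n : ℕ} (F : ComposableArrows (HoCat X) n) : Path X n where
  vertex i := F.obj i
  arrow i := (F.map (homOfLE (Fin.castSucc_le_succ i))).1
  arrow_src i := (F.map (homOfLE (Fin.castSucc_le_succ i))).2.1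
  arrow_tgt i := (F.map (homOfLE (Fin.castSucc_le_succ i))).2.2

/-- Arbitrary images under `F` are the long edges of the associated simplex. -/
lemma map_val_eq {n : ℕ} (F : ComposableArrows (HoCat X) n)
    (a b : Fin (n + 1)) (hab : a ≤ b) :
    (F.map (homOfLE hab)).1
      = X.map (mkOfLe a b hab).op ((StrictSegal.ofIsStrictSegal X).spineToSimplex (pathOf F)) := by
  obtain ⟨l, hl⟩ : ∃ l, b.1 = a.1 + l := ⟨b.1 - a.1, by omega⟩
  have hla : a.1 + l ≤ n := by omega
  have hb : b = ⟨a.1 + l, Nat.lt_succ_of_le hla⟩ := Fin.ext hl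
  subst hb
  clear hl
  induction l with
  | zero =>
    show (F.map (𝟙 a)).1
      = X.map (mkOfLe a a (le_refl a)).op ((StrictSegal.ofIsStrictSegal X).spineToSimplex (pathOf F))
    rw [F.map_id, hoHom_id_val, mkOfLe_refl, op_comp,
      FunctorToTypes.map_comp_apply, StrictSegal.spineToSimplex_vertex]
    rfl
  | succ l ih =>
    have hla' : a.1 + l ≤ n := by omega
    set c : Fin (n+1) := ⟨a.1 + l, Nat.lt_succ_of_le hla'⟩ with hc
    have h1 : a ≤ c := by rw [Fin.le_def, hc]; exact Nat.le_add_right _ _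
    have h2 : c ≤ ⟨a.1 + (l+1), Nat.lt_succ_of_le hla⟩ := by simp only [hc, Fin.mk_le_mk]; omega
    have hsplit : homOfLE hab = homOfLE h1 ≫ homOfLE h2 := rfl
    rw [hsplit, F.map_comp, hoHom_comp_val]
    refine compEdge_mkOfLe _ a c _ h1 h2 _ _ _ (ih hla' h1) ?_
    have harr := StrictSegal.spineToSimplex_arrow (StrictSegal.ofIsStrictSegal X)
      (⟨a.1 + l, by omega⟩ : Fin n) (pathOf F)
    rw [mkOfSucc_eq_mkOfLe] at harr
    exact harr.symm

end SegalProof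
namespace SegalProof

open SSet

variable {X : SSet.{u}} [IsStrictSegal X]

/-- Reinterpret a vertex as an object of the homotopy category. -/
def toObj (x : X _⦋0⦌) : HoCat X := x

lemma pathOf_injective {n : ℕ} : Function.Injective (pathOf (X := X) (n := n)) := by
  intro F G hFG
  have hv : ∀ i, F.obj i = G.obj i := fun i => congrFun (congrArg Path.vertex hFG) i
  have ha : ∀ i : Fin n, (F.map (homOfLE (Fin.castSucc_le_succ i))).1
      = (G.map (homOfLE (Fin.castSucc_le_succ i))).1 :=
    fun i => congrFun (congrArg Path.arrow hFG) i
  refine ComposableArrows.ext hv ?_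
  intro i hi
  apply Subtype.ext
  rw [val_eqToHom_comp]
  exact ha ⟨i, hi⟩

lemma pathOf_surjective {n : ℕ} : Function.Surjective (pathOf (X := X) (n := n)) := by
  intro p
  refine ⟨ComposableArrows.mkOfObjOfMapSucc (fun i => toObj (p.vertex i))
    (fun i => (⟨p.arrow i, p.arrow_src i, p.arrow_tgt i⟩ : HoHom _ _)), ?_⟩
  refine SSet.Path.ext ?_ ?_
  · funext i
    rfl
  · funext i
    have := ComposableArrows.mkOfObjOfMapSucc_map_succ
      (fun i => toObj (p.vertex i))
      (fun i => (⟨p.arrow i, p.arrow_src i, p.arrow_tgt i⟩ : HoHom _ _)) i.1 i.2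
    exact congrArg Subtype.val this

/-- The isomorphism `nerve (HoCat X) ⟶ X`, levelwise. -/
noncomputable def fromNerveApp (n : ℕ) (F : ComposableArrows (HoCat X) n) : X _⦋n⦌ :=
  (StrictSegal.ofIsStrictSegal X).spineToSimplex (pathOf F)

lemma fromNerveApp_bijective (n : ℕ) : Function.Bijective (fromNerveApp (X := X) n) :=
  (Equiv.bijective ((StrictSegal.ofIsStrictSegal X).spineEquiv n).symm).comp
    ⟨pathOf_injective, pathOf_surjective⟩

lemma fromNerve_naturality {k n : ℕ} (F : ComposableArrows (HoCat X) n)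
    (ψ : (⦋k⦌ : SimplexCategory) ⟶ ⦋n⦌) :
    X.map ψ.op (fromNerveApp n F)
      = fromNerveApp k (F.whiskerLeft (SimplexCategory.toCat.map ψ).toFunctor) := by
  have key : X.spine k (X.map ψ.op (fromNerveApp n F))
      = pathOf (F.whiskerLeft (SimplexCategory.toCat.map ψ).toFunctor) := by
    refine SSet.Path.ext ?_ ?_
    · funext i
      show X.map (SimplexCategory.const ⦋0⦌ ⦋k⦌ i).op (X.map ψ.op _) = _
      rw [← FunctorToTypes.map_comp_apply, ← op_comp, SimplexCategory.const_comp,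
        fromNerveApp, StrictSegal.spineToSimplex_vertex]
      rfl
    · funext i
      show X.map (mkOfSucc i).op (X.map ψ.op _) = _
      rw [← FunctorToTypes.map_comp_apply, ← op_comp, mkOfSucc_comp,
        fromNerveApp, ← map_val_eq]
      show _ = ((F.whiskerLeft (SimplexCategory.toCat.map ψ).toFunctor).map
        (homOfLE (Fin.castSucc_le_succ i))).1
      congr 1
  rw [show fromNerveApp k (F.whiskerLeft (SimplexCategory.toCat.map ψ).toFunctor)
      = (StrictSegal.ofIsStrictSegal X).spineToSimplex (pathOf (F.whiskerLeft (SimplexCategory.toCat.map ψ).toFunctor))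
      from rfl, ← key]
  exact (StrictSegal.spineToSimplex_spine_apply _ _).symm

end SegalProof
namespace SegalProof

open SSet

variable {X : SSet.{u}} [IsStrictSegal X]

/-- The natural isomorphism from the nerve of the homotopy category. -/
noncomputable def fromNerve : nerve (HoCat X) ⟶ X where
  app m := TypeCat.ofHom (fromNerveApp m.unop.len)
  naturality m m' φ := by
    ext F
    exact (fromNerve_naturality (k := m'.unop.len) (n := m.unop.len) F φ.unop).symm

noncomputable def isoNerve : X ≅ nerve (HoCat X) := by
  have : ∀ m, IsIso ((fromNerve (X := X)).app m) := fun m =>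
    (CategoryTheory.isIso_iff_bijective _).2 (fromNerveApp_bijective m.unop.len)
  have : IsIso (fromNerve (X := X)) := NatIso.isIso_of_isIso_app _
  exact (asIso (fromNerve (X := X))).symm

end SegalProof

namespace SegalProof

open SSet

variable (X : SSet.{u})

lemma spine_vertex_zero (Δ : X _⦋0⦌) : (X.spine 0 Δ).vertex 0 = Δ := by
  show X.map (SimplexCategory.const ⦋0⦌ ⦋0⦌ 0).op Δ = Δ
  rw [const_eq_id, op_id, FunctorToTypes.map_id_apply]

lemma spine_zero_bijective : Function.Bijective (X.spine 0) := by
  constructor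
  · intro Δ Δ' h
    rw [← spine_vertex_zero X Δ, ← spine_vertex_zero X Δ', h]
  · intro p
    refine ⟨p.vertex 0, ?_⟩
    refine SSet.Path.ext ?_ ?_
    · funext i
      fin_cases i
      exact spine_vertex_zero X (p.vertex 0)
    · funext i
      exact i.elim0

lemma spine_arrow_zero (Δ : X _⦋1⦌) : (X.spine 1 Δ).arrow 0 = Δ := by
  show X.map (mkOfSucc 0).op Δ = Δ
  rw [mkOfSucc_zero_one, op_id, FunctorToTypes.map_id_apply]

lemma spine_one_bijective : Function.Bijective (X.spine 1) := by
  constructor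
  · intro Δ Δ' h
    rw [← spine_arrow_zero X Δ, ← spine_arrow_zero X Δ', h]
  · intro p
    refine ⟨p.arrow 0, ?_⟩
    refine SSet.Path.ext ?_ ?_
    · funext i
      have h1 : SimplexCategory.const ⦋0⦌ ⦋1⦌ 0 = SimplexCategory.δ 1 := by
        apply SimplexCategory.Hom.ext_zero_left; rfl
      have h2 : SimplexCategory.const ⦋0⦌ ⦋1⦌ 1 = SimplexCategory.δ 0 := by
        apply SimplexCategory.Hom.ext_zero_left; rfl
      fin_cases i
      · show X.map (SimplexCategory.const ⦋0⦌ ⦋1⦌ 0).op (p.arrow 0) = p.vertex 0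
        rw [h1]
        exact p.arrow_src 0
      · show X.map (SimplexCategory.const ⦋0⦌ ⦋1⦌ 1).op (p.arrow 0) = p.vertex 1
        rw [h2]
        exact p.arrow_tgt 0
    · funext i
      fin_cases i
      exact spine_arrow_zero X (p.arrow 0)

/-- Strict Segal structure from bijectivity of all spine maps. -/
noncomputable def strictSegalOfBijective (h : ∀ n, Function.Bijective (X.spine n)) :
    IsStrictSegal X where
  segal := h

lemma all_spine_bijective (h : ∀ k : ℕ, 2 ≤ k → Function.Bijective (X.spine k)) :
    ∀ n, Function.Bijective (X.spine n) := fun n =>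
  match n with
  | 0 => spine_zero_bijective X
  | 1 => spine_one_bijective X
  | (n+2) => h (n+2) (by omega)

variable {X}

lemma spine_map_naturality {Y : SSet.{u}} (σ : X ⟶ Y) {n : ℕ} (Δ : X _⦋n⦌) :
    Y.spine n (σ.app _ Δ) = (X.spine n Δ).map σ := by
  refine SSet.Path.ext ?_ ?_
  · funext i
    exact (NatTrans.naturality_apply σ _ Δ).symm
  · funext i
    exact (NatTrans.naturality_apply σ _ Δ).symm

lemma path_map_hom_inv {Y : SSet.{u}} (e : X ≅ Y) {n : ℕ} (p : Path X n) :
    (p.map e.hom).map e.inv = p := by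
  refine SSet.Path.ext ?_ ?_
  · funext i
    exact Iso.hom_inv_id_app_apply e _ (p.vertex i)
  · funext i
    exact Iso.hom_inv_id_app_apply e _ (p.arrow i)

end SegalProof
open SegalProof SSet

theorem nerve_characterisation_by_segal_maps (A : SSet.{u}) :
    ((∀ k : ℕ, 2 ≤ k → Function.Bijective (A.spine k)) ↔
      ∃ (C : Type u) (_ : SmallCategory C), Nonempty (A ≅ nerve C)) ∧
    ∀ (C : Type u) (inst : SmallCategory C) (k : ℕ), 2 ≤ k →
      Function.Bijective ((@nerve C inst).spine k) := by
  have nerve_segal : ∀ (C : Type u) (inst : SmallCategory C) (k : ℕ), 2 ≤ k →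
      Function.Bijective ((@nerve C inst).spine k) := by
    intro C inst k _
    exact ((CategoryTheory.Nerve.strictSegal C).spineEquiv k).bijective
  refine ⟨⟨?_, ?_⟩, nerve_segal⟩
  · intro h
    haveI : IsStrictSegal A := strictSegalOfBijective A (all_spine_bijective A h)
    exact ⟨HoCat A, inferInstance, ⟨isoNerve⟩⟩
  · rintro ⟨C, inst, ⟨e⟩⟩ k hk
    have h1 : Function.Bijective ((nerve C).spine k) := nerve_segal C inst k hk
    have key : A.spine k = (fun p => p.map e.inv) ∘ ((nerve C).spine k)
        ∘ (e.hom.app (Opposite.op (SimplexCategory.mk k))) := by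
      funext Δ
      show A.spine k Δ = ((nerve C).spine k (e.hom.app _ Δ)).map e.inv
      rw [spine_map_naturality e.hom Δ]
      exact (path_map_hom_inv e _).symm
    have h2 : Function.Bijective (e.hom.app (Opposite.op (SimplexCategory.mk k))) :=
      (CategoryTheory.isIso_iff_bijective _).1 inferInstance
    have h3 : Function.Bijective (fun p : Path (nerve C) k => p.map e.inv) :=
      Function.bijective_iff_has_inverse.mpr
        ⟨fun p => p.map e.hom, fun p => path_map_hom_inv e.symm p,
          fun p => path_map_hom_inv e p⟩
    rw [key]
    exact (h3.comp h1).comp h2
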